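/- (Finitized Rogers–Ramanujan identities) For a ∈ {0,1} and every integer L ≥ a, the following polynomial identity holds: Σ_{m=0}^{∞} q^{m(m+a)} [ L−m−a ; m ] = Σ_{j=−∞}^{∞} (−1)^j q^{j(5j+1+2a)/2} [ L ; ⌊(L − 5j − a)/2⌋ ], where both sums have only finitely many nonzero terms. -/

import Mathlib

attribute [local instance] Classical.propDecidable

noncomputable section

variable {K : Type*} [Field K]

/-- `(q)_n = ∏_{k=1}^n (1 - q^k)`. -/
def qPoch (q : K) (n : ℕ) : K :=
  ∏ k ∈ Finset.range n, (1 - q ^ (k + 1))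

/-- the Gaussian polynomial `[N; m]`. -/
def gauss (q : K) (N m : ℤ) : K :=
  if 0 ≤ m ∧ m ≤ N then qPoch q N.toNat / (qPoch q m.toNat * qPoch q (N - m).toNat) else 0

namespace RR

abbrev F := RatFunc ℚ

abbrev X : F := RatFunc.X

lemma X_ne_zero : (X : F) ≠ 0 := RatFunc.X_ne_zero

lemma one_sub_X_pow_ne_zero {n : ℕ} (hn : 0 < n) : (1 : F) - X ^ n ≠ 0 := by
  intro h
  have h1 : (X : F) ^ n = 1 := by linear_combination -h
  have h2 : (algebraMap (Polynomial ℚ) F) (Polynomial.X ^ n) = algebraMap (Polynomial ℚ) F 1 := by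
    simpa [map_pow, RatFunc.algebraMap_X] using h1
  have h3 : (Polynomial.X : Polynomial ℚ) ^ n = 1 := by
    exact IsFractionRing.injective (Polynomial ℚ) F h2
  have := congrArg (Polynomial.eval 0) h3
  simp [Polynomial.eval_pow, zero_pow hn.ne'] at this

lemma qPoch_ne_zero (n : ℕ) : qPoch (X : F) n ≠ 0 := by
  rw [qPoch]
  exact Finset.prod_ne_zero_iff.2 fun k _ => one_sub_X_pow_ne_zero k.succ_pos

lemma qPoch_succ (n : ℕ) : qPoch (X : F) (n + 1) = qPoch X n * (1 - X ^ (n + 1)) := by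
  rw [qPoch, Finset.prod_range_succ]; rfl

lemma gauss_eq_zero {N m : ℤ} (h : ¬(0 ≤ m ∧ m ≤ N)) : gauss (X : F) N m = 0 := if_neg h

lemma gauss_nat (n m : ℕ) (h : m ≤ n) :
    gauss (X : F) (n : ℤ) (m : ℤ) = qPoch X n / (qPoch X m * qPoch X (n - m)) := by
  rw [gauss, if_pos ⟨Int.natCast_nonneg m, by exact_mod_cast h⟩]
  have : ((n : ℤ) - m).toNat = n - m := by omega
  rw [this, Int.toNat_natCast, Int.toNat_natCast]

lemma gauss_zero {N : ℤ} (h : 0 ≤ N) : gauss (X : F) N 0 = 1 := by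
  rw [gauss, if_pos ⟨le_refl 0, h⟩]
  simp [qPoch, div_self (qPoch_ne_zero N.toNat)]
  exact qPoch_ne_zero N.toNat

lemma gauss_self {N : ℤ} (h : 0 ≤ N) : gauss (X : F) N N = 1 := by
  rw [gauss, if_pos ⟨h, le_refl N⟩]
  simp [qPoch]
  exact qPoch_ne_zero N.toNat

lemma key1 (m u : ℕ) :
    qPoch (X:F) (m+u+2) / (qPoch X (m+1) * qPoch X (u+1))
      = qPoch X (m+u+1) / (qPoch X (m+1) * qPoch X u)
        + X ^ (u+1) * (qPoch X (m+u+1) / (qPoch X m * qPoch X (u+1))) := by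
  have h1 : qPoch (X:F) (m+u+2) = qPoch X (m+u+1) * (1 - X ^ (m+u+2)) := qPoch_succ (m+u+1)
  have h2 : qPoch (X:F) (m+1) = qPoch X m * (1 - X ^ (m+1)) := qPoch_succ m
  have h3 : qPoch (X:F) (u+1) = qPoch X u * (1 - X ^ (u+1)) := qPoch_succ u
  rw [h1, h2, h3]
  have hm := qPoch_ne_zero m
  have hu := qPoch_ne_zero u
  have e1 : (1:F) - X ^ (m+1) ≠ 0 := one_sub_X_pow_ne_zero (by omega)
  have e2 : (1:F) - X ^ (u+1) ≠ 0 := one_sub_X_pow_ne_zero (by omega)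
  field_simp
  ring

lemma key2 (m u : ℕ) :
    qPoch (X:F) (m+u+2) / (qPoch X (m+1) * qPoch X (u+1))
      = qPoch X (m+u+1) / (qPoch X m * qPoch X (u+1))
        + X ^ (m+1) * (qPoch X (m+u+1) / (qPoch X (m+1) * qPoch X u)) := by
  have h1 : qPoch (X:F) (m+u+2) = qPoch X (m+u+1) * (1 - X ^ (m+u+2)) := qPoch_succ (m+u+1)
  have h2 : qPoch (X:F) (m+1) = qPoch X m * (1 - X ^ (m+1)) := qPoch_succ m
  have h3 : qPoch (X:F) (u+1) = qPoch X u * (1 - X ^ (u+1)) := qPoch_succ u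
  rw [h1, h2, h3]
  have hm := qPoch_ne_zero m
  have hu := qPoch_ne_zero u
  have e1 : (1:F) - X ^ (m+1) ≠ 0 := one_sub_X_pow_ne_zero (by omega)
  have e2 : (1:F) - X ^ (u+1) ≠ 0 := one_sub_X_pow_ne_zero (by omega)
  field_simp
  ring

end RR

namespace RR

lemma pascal1 {L : ℤ} (k : ℤ) (hL : 1 ≤ L) :
    gauss (X:F) L k = gauss X (L-1) k + X ^ (L - k) * gauss X (L-1) (k-1) := by
  rcases lt_or_ge k 0 with hk | hk
  · rw [gauss_eq_zero (by omega), gauss_eq_zero (by omega), gauss_eq_zero (by omega)]; ring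
  rcases eq_or_lt_of_le hk with hk0 | hkpos
  · rw [← hk0, gauss_zero (by omega), gauss_zero (by omega), gauss_eq_zero (by omega)]; ring
  rcases lt_trichotomy k L with hkl | hkl | hkl
  · -- main case 1 ≤ k ≤ L-1
    set m := (k-1).toNat with hm
    set u := (L-k-1).toNat with hu
    have hk' : k = (m:ℤ)+1 := by omega
    have hL' : L = (m:ℤ)+(u:ℤ)+2 := by omega
    have e1 : gauss (X:F) L k = qPoch X (m+u+2)/(qPoch X (m+1) * qPoch X (u+1)) := by
      have h := gauss_nat (m+u+2) (m+1) (by omega)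
      have hs : m+u+2-(m+1) = u+1 := by omega
      rw [hs] at h
      rw [show L = ((m+u+2 : ℕ) : ℤ) by push_cast; omega,
          show k = ((m+1 : ℕ) : ℤ) by push_cast; omega, h]
    have e2 : gauss (X:F) (L-1) k = qPoch X (m+u+1)/(qPoch X (m+1) * qPoch X u) := by
      have h := gauss_nat (m+u+1) (m+1) (by omega)
      have hs : m+u+1-(m+1) = u := by omega
      rw [hs] at h
      rw [show L - 1 = ((m+u+1 : ℕ) : ℤ) by push_cast; omega,
          show k = ((m+1 : ℕ) : ℤ) by push_cast; omega, h]
    have e3 : gauss (X:F) (L-1) (k-1) = qPoch X (m+u+1)/(qPoch X m * qPoch X (u+1)) := by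
      have h := gauss_nat (m+u+1) m (by omega)
      have hs : m+u+1-m = u+1 := by omega
      rw [hs] at h
      rw [show k - 1 = ((m : ℕ) : ℤ) by push_cast; omega,
          show L - 1 = ((m+u+1 : ℕ) : ℤ) by push_cast; omega, h]
    have e4 : (X:F) ^ (L - k) = X ^ (u+1 : ℕ) := by
      have : L - k = ((u+1 : ℕ) : ℤ) := by omega
      rw [this, zpow_natCast]
    rw [e1, e2, e3, e4]
    exact key1 m u
  · rw [hkl, gauss_self (by omega), gauss_eq_zero (by omega), sub_self, zpow_zero,
      gauss_self (by omega)]; ring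
  · rw [gauss_eq_zero (by omega), gauss_eq_zero (by omega), gauss_eq_zero (by omega)]; ring

lemma pascal2 {L : ℤ} (k : ℤ) (hL : 1 ≤ L) :
    gauss (X:F) L k = gauss X (L-1) (k-1) + X ^ k * gauss X (L-1) k := by
  rcases lt_or_ge k 0 with hk | hk
  · rw [gauss_eq_zero (by omega), gauss_eq_zero (by omega), gauss_eq_zero (by omega)]; ring
  rcases eq_or_lt_of_le hk with hk0 | hkpos
  · rw [← hk0, gauss_zero (by omega), gauss_zero (by omega), gauss_eq_zero (by omega)]
    norm_num
  rcases lt_trichotomy k L with hkl | hkl | hkl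
  · set m := (k-1).toNat with hm
    set u := (L-k-1).toNat with hu
    have hk' : k = (m:ℤ)+1 := by omega
    have hL' : L = (m:ℤ)+(u:ℤ)+2 := by omega
    have e1 : gauss (X:F) L k = qPoch X (m+u+2)/(qPoch X (m+1) * qPoch X (u+1)) := by
      have h := gauss_nat (m+u+2) (m+1) (by omega)
      have hs : m+u+2-(m+1) = u+1 := by omega
      rw [hs] at h
      rw [show L = ((m+u+2 : ℕ) : ℤ) by push_cast; omega,
          show k = ((m+1 : ℕ) : ℤ) by push_cast; omega, h]
    have e2 : gauss (X:F) (L-1) (k-1) = qPoch X (m+u+1)/(qPoch X m * qPoch X (u+1)) := by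
      have h := gauss_nat (m+u+1) m (by omega)
      have hs : m+u+1-m = u+1 := by omega
      rw [hs] at h
      rw [show k - 1 = ((m : ℕ) : ℤ) by push_cast; omega,
          show L - 1 = ((m+u+1 : ℕ) : ℤ) by push_cast; omega, h]
    have e3 : gauss (X:F) (L-1) k = qPoch X (m+u+1)/(qPoch X (m+1) * qPoch X u) := by
      have h := gauss_nat (m+u+1) (m+1) (by omega)
      have hs : m+u+1-(m+1) = u := by omega
      rw [hs] at h
      rw [show L - 1 = ((m+u+1 : ℕ) : ℤ) by push_cast; omega,
          show k = ((m+1 : ℕ) : ℤ) by push_cast; omega, h]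
    have e4 : (X:F) ^ k = X ^ (m+1 : ℕ) := by
      have : k = ((m+1 : ℕ) : ℤ) := by omega
      rw [this, zpow_natCast]
    rw [e1, e2, e3, e4]
    exact key2 m u
  · rw [hkl, gauss_self (by omega), gauss_self (by omega), gauss_eq_zero (by omega)]; ring
  · rw [gauss_eq_zero (by omega), gauss_eq_zero (by omega), gauss_eq_zero (by omega)]; ring

end RR

namespace RR

lemma ediv2 (x : ℤ) : Int.ediv x 2 = x / 2 := rfl

def Ex (a : ℕ) (j : ℤ) : ℤ := Int.ediv (j * (5 * j + 1 + 2 * (a:ℤ))) 2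

def cf (a : ℕ) (j : ℤ) : F := (-1:F) ^ j * X ^ (Ex a j)

def kf (a : ℕ) (L j : ℤ) : ℤ := Int.ediv (L - 5 * j - (a:ℤ)) 2

def Tf (a : ℕ) (L : ℤ) (j : ℤ) : F := cf a j * gauss X L (kf a L j)

def Tsum (a : ℕ) (L : ℤ) : F := ∑ᶠ j, Tf a L j

def rf (a : ℕ) (L : ℤ) (j : ℤ) : F :=
  if (L - 5*j - (a:ℤ)) % 2 = 0 then cf a j * X ^ (kf a L j) * gauss X (L-1) (kf a L j)
  else cf a j * X ^ (L - kf a L j) * gauss X (L-1) (kf a L j - 1)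

def sf (a : ℕ) (L : ℤ) (j : ℤ) : F :=
  if (L - 5*j - (a:ℤ)) % 2 = 0 then cf a j * X ^ (kf a L j) * gauss X (L-2) (kf a L j)
  else cf a j * X ^ (L - kf a L j) * gauss X (L-2) (kf a L j - 2)

lemma cf_ne_zero (a : ℕ) (j : ℤ) : cf a j ≠ 0 :=
  mul_ne_zero (zpow_ne_zero _ (by norm_num)) (zpow_ne_zero _ X_ne_zero)

lemma gauss_cond {N m : ℤ} (h : gauss (X:F) N m ≠ 0) : 0 ≤ m ∧ m ≤ N := by
  by_contra hc; exact h (gauss_eq_zero hc)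

lemma Tf_support (a : ℕ) (L : ℤ) :
    Function.support (Tf a L) ⊆ Set.Icc (-(L+a+2)) (L+a+2) := by
  intro j hj
  have hg : gauss (X:F) L (kf a L j) ≠ 0 := fun h => hj (by rw [Tf, h, mul_zero])
  have hc := gauss_cond hg
  simp only [kf, ediv2] at hc
  rw [Set.mem_Icc]
  omega

lemma Tf_support_finite (a : ℕ) (L : ℤ) : (Function.support (Tf a L)).Finite :=
  (Set.finite_Icc _ _).subset (Tf_support a L)

lemma sf_support_finite (a : ℕ) (L : ℤ) : (Function.support (sf a L)).Finite := by
  apply (Set.finite_Icc (-(L+a+2)) (L+a+2)).subset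
  intro j hj
  rw [Function.mem_support, sf] at hj
  rw [Set.mem_Icc]
  split_ifs at hj with hp
  · have hg : gauss (X:F) (L-2) (kf a L j) ≠ 0 := fun h => hj (by rw [h, mul_zero])
    have hc := gauss_cond hg
    simp only [kf, ediv2] at hc
    omega
  · have hg : gauss (X:F) (L-2) (kf a L j - 2) ≠ 0 := fun h => hj (by rw [h, mul_zero])
    have hc := gauss_cond hg
    simp only [kf, ediv2] at hc
    omega

lemma stepA (a : ℕ) {L : ℤ} (hL : 1 ≤ L) (j : ℤ) :
    Tf a L j = Tf a (L-1) j + rf a L j := by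
  by_cases hp : (L - 5*j - (a:ℤ)) % 2 = 0
  · have hk : kf a (L-1) j = kf a L j - 1 := by simp only [kf, ediv2]; omega
    rw [Tf, Tf, rf, if_pos hp, hk, pascal2 (kf a L j) hL]
    ring
  · have hk : kf a (L-1) j = kf a L j := by simp only [kf, ediv2]; omega
    rw [Tf, Tf, rf, if_neg hp, hk, pascal1 (kf a L j) hL]
    ring

lemma stepB (a : ℕ) {L : ℤ} (hL : 2 ≤ L) (j : ℤ) :
    rf a L j = X ^ (L-1) * Tf a (L-2) j + sf a L j := by
  by_cases hp : (L - 5*j - (a:ℤ)) % 2 = 0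
  · have hk : kf a (L-2) j = kf a L j - 1 := by simp only [kf, ediv2]; omega
    rw [rf, if_pos hp, sf, if_pos hp, Tf, hk]
    have h1 := pascal1 (L := L-1) (kf a L j) (by omega)
    rw [show L - 1 - 1 = L - 2 by ring] at h1
    rw [h1]
    have hx : (X:F) ^ (kf a L j) * X ^ (L-1-kf a L j) = X ^ (L-1) := by
      rw [← zpow_add₀ X_ne_zero]; congr 1; ring
    linear_combination (cf a j * gauss X (L-2) (kf a L j - 1)) * hx
  · have hk : kf a (L-2) j = kf a L j - 1 := by simp only [kf, ediv2]; omega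
    rw [rf, if_neg hp, sf, if_neg hp, Tf, hk]
    have h1 := pascal2 (L := L-1) (kf a L j - 1) (by omega)
    rw [show L - 1 - 1 = L - 2 by ring, show kf a L j - 1 - 1 = kf a L j - 2 by ring] at h1
    rw [h1]
    have hx : (X:F) ^ (L - kf a L j) * X ^ (kf a L j - 1) = X ^ (L-1) := by
      rw [← zpow_add₀ X_ne_zero]; congr 1; ring
    linear_combination (cf a j * gauss X (L-2) (kf a L j - 1)) * hx

lemma two_dvd_ex (a : ℕ) (j : ℤ) : (2:ℤ) ∣ j * (5*j+1+2*(a:ℤ)) := by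
  rcases Int.even_or_odd j with ⟨c, hc⟩ | ⟨c, hc⟩
  · exact ⟨c * (5*j+1+2*(a:ℤ)), by rw [hc]; ring⟩
  · exact ⟨j * (5*c+3+(a:ℤ)), by rw [hc]; ring⟩

lemma two_mul_Ex (a : ℕ) (j : ℤ) : 2 * Ex a j = j * (5*j+1+2*(a:ℤ)) :=
  Int.mul_ediv_cancel' (two_dvd_ex a j)

lemma pair_cancel (a : ℕ) (L j : ℤ) (hp : (L - 5*j - (a:ℤ)) % 2 = 0) :
    sf a L j + sf a L (j-1) = 0 := by
  have hp' : ¬ ((L - 5*(j-1) - (a:ℤ)) % 2 = 0) := by omega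
  rw [sf, if_pos hp, sf, if_neg hp']
  have hk2 : kf a L (j-1) = kf a L j + 2 := by simp only [kf, ediv2]; omega
  rw [hk2, show kf a L j + 2 - 2 = kf a L j by ring]
  have h2k : 2 * kf a L j = L - 5*j - (a:ℤ) := by simp only [kf, ediv2]; omega
  have hEj := two_mul_Ex a j
  have hEj' := two_mul_Ex a (j-1)
  have hr : j*(5*j+1+2*(a:ℤ)) - (j-1)*(5*(j-1)+1+2*(a:ℤ)) = 10*j - 4 + 2*(a:ℤ) := by ring
  have hexp : Ex a (j-1) + (L - (kf a L j + 2)) = Ex a j + kf a L j := by linarith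
  have hneg : ((-1:F)) ^ (j-1) = -((-1:F)) ^ j := by
    rw [zpow_sub₀ (by norm_num : (-1:F) ≠ 0), zpow_one]
    field_simp
  rw [cf, cf, hneg]
  have hx : (X:F) ^ (Ex a (j-1)) * X ^ (L-(kf a L j + 2)) = X ^ (Ex a j) * X ^ (kf a L j) := by
    rw [← zpow_add₀ X_ne_zero, ← zpow_add₀ X_ne_zero, hexp]
  linear_combination (-((-1:F) ^ j * gauss X (L-2) (kf a L j))) * hx

lemma stepC (a : ℕ) (L : ℤ) : ∑ᶠ j, sf a L j = 0 := by
  classical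
  have hfin := sf_support_finite a L
  set u : ℤ → F := fun j => if (L - 5*j - (a:ℤ)) % 2 = 0 then sf a L j else 0 with hu_def
  set w : ℤ → F := fun j => if (L - 5*j - (a:ℤ)) % 2 = 0 then 0 else sf a L j with hw_def
  have hu : Function.support u ⊆ Function.support (sf a L) := by
    intro j hj; rw [Function.mem_support] at hj ⊢
    intro h; apply hj; simp [hu_def, h]
  have hw : Function.support w ⊆ Function.support (sf a L) := by
    intro j hj; rw [Function.mem_support] at hj ⊢
    intro h; apply hj; simp [hw_def, h]
  have hufin := hfin.subset hu
  have hwfin := hfin.subset hw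
  have hsplit : ∑ᶠ j, sf a L j = (∑ᶠ j, u j) + ∑ᶠ j, w j := by
    rw [← finsum_add_distrib hufin hwfin]
    apply finsum_congr
    intro j
    rw [hu_def, hw_def]
    by_cases hp : (L - 5*j - (a:ℤ)) % 2 = 0 <;> simp [hp]
  have hshift : ∑ᶠ j, w j = ∑ᶠ j, w (j - 1) :=
    (finsum_comp_equiv (Equiv.subRight (1:ℤ))).symm
  have hwfin' : (Function.support fun j => w (j-1)).Finite := by
    apply ((hwfin).image (fun x => x + 1)).subset
    intro j hj
    exact ⟨j - 1, hj, by ring⟩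
  rw [hsplit, hshift, ← finsum_add_distrib hufin hwfin']
  have : ∀ j : ℤ, u j + w (j - 1) = 0 := by
    intro j
    by_cases hp : (L - 5*j - (a:ℤ)) % 2 = 0
    · have hp' : ¬ ((L - 5*(j-1) - (a:ℤ)) % 2 = 0) := by omega
      rw [hu_def, hw_def]
      simp only [if_pos hp, if_neg hp']
      exact pair_cancel a L j hp
    · have hp' : (L - 5*(j-1) - (a:ℤ)) % 2 = 0 := by omega
      rw [hu_def, hw_def]
      simp only [if_neg hp, if_pos hp']
      rw [add_zero]
  simp only [this, finsum_zero]

lemma T_rec (a : ℕ) {L : ℤ} (hL : 2 ≤ L) :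
    Tsum a L = Tsum a (L-1) + X ^ (L-1) * Tsum a (L-2) := by
  have hr_eq : ∀ j, rf a L j = Tf a L j - Tf a (L-1) j := by
    intro j; rw [stepA a (by omega : 1 ≤ L) j]; ring
  have hrfin : (Function.support (rf a L)).Finite := by
    apply ((Tf_support_finite a L).union (Tf_support_finite a (L-1))).subset
    intro j hj
    rw [Function.mem_support, hr_eq] at hj
    by_contra hc
    simp only [Set.mem_union, Function.mem_support, not_or, not_not] at hc
    rw [hc.1, hc.2, sub_zero] at hj
    exact hj rfl
  have hTfin' : (Function.support fun j => X ^ (L-1) * Tf a (L-2) j).Finite := by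
    apply (Tf_support_finite a (L-2)).subset
    intro j hj
    rw [Function.mem_support] at hj ⊢
    intro h; apply hj; rw [h, mul_zero]
  calc Tsum a L = ∑ᶠ j, (Tf a (L-1) j + rf a L j) :=
        finsum_congr (stepA a (by omega : 1 ≤ L))
    _ = Tsum a (L-1) + ∑ᶠ j, rf a L j :=
        finsum_add_distrib (Tf_support_finite a (L-1)) hrfin
    _ = Tsum a (L-1) + ∑ᶠ j, (X ^ (L-1) * Tf a (L-2) j + sf a L j) := by
        rw [finsum_congr (stepB a hL)]
    _ = Tsum a (L-1) + ((∑ᶠ j, X ^ (L-1) * Tf a (L-2) j) + ∑ᶠ j, sf a L j) := by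
        rw [finsum_add_distrib hTfin' (sf_support_finite a L)]
    _ = Tsum a (L-1) + X ^ (L-1) * Tsum a (L-2) := by
        rw [stepC, add_zero]
        simp only [Tsum]
        rw [← mul_finsum (Tf a (L-2)) (X ^ (L-1))]

end RR

namespace RR

def Sf (a L : ℕ) (m : ℕ) : F := X ^ (m * (m + a)) * gauss X ((L:ℤ) - m - a) (m:ℤ)

def Ssum (a L : ℕ) : F := ∑ᶠ m, Sf a L m

def gf (a N m : ℕ) : F :=
  X ^ (m * (m + a)) * X ^ ((N:ℤ)+2-2*(m:ℤ)-(a:ℤ)) * gauss X ((N:ℤ)+1-(m:ℤ)-(a:ℤ)) ((m:ℤ)-1)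

lemma Sf_bound (a L m : ℕ) (h : Sf a L m ≠ 0) : 2*m + a ≤ L := by
  have hg : gauss (X:F) ((L:ℤ)-m-a) (m:ℤ) ≠ 0 := fun hh => h (by rw [Sf, hh, mul_zero])
  have := gauss_cond hg
  omega

lemma S_point1 (a N m : ℕ) (hm : m < N+2-a) (haN : a ≤ N) :
    Sf a (N+2) m = Sf a (N+1) m + gf a N m := by
  have hL1 : (1:ℤ) ≤ ((N+2:ℕ):ℤ) - m - a := by push_cast; omega
  have hp := pascal1 (L := ((N+2:ℕ):ℤ) - m - a) (m:ℤ) hL1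
  rw [Sf, hp, Sf, gf]
  rw [show ((N+2:ℕ):ℤ) - (m:ℤ) - (a:ℤ) - 1 = ((N+1:ℕ):ℤ) - (m:ℤ) - (a:ℤ) by push_cast; ring]
  rw [show ((N+2:ℕ):ℤ) - (m:ℤ) - (a:ℤ) - (m:ℤ) = (N:ℤ)+2-2*(m:ℤ)-(a:ℤ) by push_cast; ring]
  rw [show ((N+1:ℕ):ℤ) - (m:ℤ) - (a:ℤ) = (N:ℤ)+1-(m:ℤ)-(a:ℤ) by push_cast; ring]
  ring

lemma S_point2 (a N m : ℕ) : gf a N (m+1) = X ^ (N+1) * Sf a N m := by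
  rw [gf, Sf]
  rw [show (N:ℤ)+1-((m+1:ℕ):ℤ)-(a:ℤ) = (N:ℤ)-(m:ℤ)-(a:ℤ) by push_cast; ring]
  rw [show ((m+1:ℕ):ℤ)-1 = (m:ℤ) by push_cast; ring]
  have hx : (X:F) ^ ((m+1)*(m+1+a)) * X ^ ((N:ℤ)+2-2*((m+1:ℕ):ℤ)-(a:ℤ))
      = X ^ (N+1) * X ^ (m*(m+a)) := by
    rw [← zpow_natCast (X:F) ((m+1)*(m+1+a)), ← zpow_natCast (X:F) (N+1),
      ← zpow_natCast (X:F) (m*(m+a)), ← zpow_add₀ X_ne_zero, ← zpow_add₀ X_ne_zero]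
    congr 1
    push_cast; ring
  linear_combination (gauss X ((N:ℤ)-(m:ℤ)-(a:ℤ)) (m:ℤ)) * hx

lemma gf_zero (a N : ℕ) : gf a N 0 = 0 := by
  rw [gf, gauss_eq_zero (by norm_num), mul_zero]

lemma S_rec (a N : ℕ) (haN : a ≤ N) :
    Ssum a (N+2) = Ssum a (N+1) + X ^ (N+1) * Ssum a N := by
  classical
  have h2 : Ssum a (N+2) = ∑ m ∈ Finset.range (N+2-a), Sf a (N+2) m := by
    apply finsum_eq_sum_of_support_subset
    intro m hm
    have := Sf_bound a (N+2) m hm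
    simp only [Finset.coe_range, Set.mem_Iio]
    omega
  have h1 : Ssum a (N+1) = ∑ m ∈ Finset.range (N+2-a), Sf a (N+1) m := by
    apply finsum_eq_sum_of_support_subset
    intro m hm
    have := Sf_bound a (N+1) m hm
    simp only [Finset.coe_range, Set.mem_Iio]
    omega
  have h0 : Ssum a N = ∑ m ∈ Finset.range (N+1-a), Sf a N m := by
    apply finsum_eq_sum_of_support_subset
    intro m hm
    have := Sf_bound a N m hm
    simp only [Finset.coe_range, Set.mem_Iio]
    omega
  rw [h2, h1, h0]
  rw [Finset.sum_congr rfl (fun m hm => S_point1 a N m (Finset.mem_range.mp hm) haN)]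
  rw [Finset.sum_add_distrib]
  congr 1
  rw [show N+2-a = (N+1-a)+1 by omega, Finset.sum_range_succ', gf_zero, add_zero]
  rw [Finset.sum_congr rfl (fun m _ => S_point2 a N m), ← Finset.mul_sum]

end RR

namespace RR

lemma Ssum_base0 (a : ℕ) : Ssum a a = 1 := by
  rw [Ssum, finsum_eq_single _ 0 ?h]
  case h =>
    intro m hm
    rw [Sf, gauss_eq_zero (by omega), mul_zero]
  rw [Sf]
  rw [show ((a:ℤ) - ((0:ℕ):ℤ) - (a:ℤ)) = 0 by push_cast; ring]
  simp only [Nat.cast_zero]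
  rw [gauss_zero le_rfl]
  norm_num

lemma Ssum_base1 (a : ℕ) : Ssum a (a+1) = 1 := by
  rw [Ssum, finsum_eq_single _ 0 ?h]
  case h =>
    intro m hm
    rw [Sf, gauss_eq_zero (by push_cast; omega), mul_zero]
  rw [Sf]
  rw [show (((a+1:ℕ):ℤ) - ((0:ℕ):ℤ) - (a:ℤ)) = 1 by push_cast; ring]
  simp only [Nat.cast_zero]
  rw [gauss_zero one_pos.le]
  norm_num

lemma Ex_zero (a : ℕ) : Ex a 0 = 0 := by
  rw [Ex, zero_mul]
  rfl

lemma Tsum_base0 (a : ℕ) (ha : a ≤ 1) : Tsum a a = 1 := by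
  rw [Tsum, finsum_eq_single _ 0 ?h]
  case h =>
    intro j hj
    rw [Tf, gauss_eq_zero ?hc, mul_zero]
    case hc => simp only [kf, ediv2]; omega
  rw [Tf, cf, Ex_zero]
  rw [show kf a a 0 = 0 by simp only [kf, ediv2]; omega]
  rw [gauss_zero (by positivity)]
  norm_num

lemma Tsum_base1 (a : ℕ) (ha : a ≤ 1) : Tsum a ((a:ℤ)+1) = 1 := by
  rw [Tsum, finsum_eq_single _ 0 ?h]
  case h =>
    intro j hj
    rw [Tf, gauss_eq_zero ?hc, mul_zero]
    case hc => simp only [kf, ediv2]; omega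
  rw [Tf, cf, Ex_zero]
  rw [show kf a ((a:ℤ)+1) 0 = 0 by simp only [kf, ediv2]; omega]
  rw [gauss_zero (by positivity)]
  norm_num

lemma main (a : ℕ) (ha : a ≤ 1) (L : ℕ) (hL : a ≤ L) : Ssum a L = Tsum a (L:ℤ) := by
  have key : ∀ n : ℕ, ∀ a : ℕ, a ≤ 1 → Ssum a (a+n) = Tsum a ((a:ℤ)+(n:ℤ)) := by
    intro n
    induction n using Nat.strong_induction_on with
    | _ n ih =>
      intro a ha
      match n with
      | 0 => simpa using (Ssum_base0 a).trans (Tsum_base0 a ha).symm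
      | 1 => simpa using (Ssum_base1 a).trans (Tsum_base1 a ha).symm
      | (k+2) =>
        have e1' : Ssum a (a+k+1) = Tsum a ((a:ℤ)+(k:ℤ)+1) := by
          have := ih (k+1) (by omega) a ha
          rwa [show a+(k+1) = a+k+1 by omega,
            show ((a:ℤ)+((k+1:ℕ):ℤ)) = (a:ℤ)+(k:ℤ)+1 by push_cast; ring] at this
        have e0' : Ssum a (a+k) = Tsum a ((a:ℤ)+(k:ℤ)) := ih k (by omega) a ha
        rw [show a+(k+2) = (a+k)+2 by omega,
          show ((a:ℤ)+((k+2:ℕ):ℤ)) = (a:ℤ)+(k:ℤ)+2 by push_cast; ring]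
        rw [S_rec a (a+k) (by omega)]
        rw [e1', e0']
        rw [T_rec a (L := (a:ℤ)+(k:ℤ)+2) (by omega)]
        rw [show (a:ℤ)+(k:ℤ)+2-1 = (a:ℤ)+(k:ℤ)+1 by ring,
          show (a:ℤ)+(k:ℤ)+2-2 = (a:ℤ)+(k:ℤ) by ring]
        rw [show ((a:ℤ)+(k:ℤ)+1) = ((a+k+1 : ℕ):ℤ) by push_cast; ring, zpow_natCast]
  have := key (L-a) a ha
  rwa [show a+(L-a) = L by omega, show ((a:ℤ)+((L-a:ℕ):ℤ)) = (L:ℤ) by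
    have : a ≤ L := hL
    push_cast [this]
    omega] at this

end RR


/-- **The finitized Rogers–Ramanujan identities** (Schur): for `a ∈ {0,1}` and `L ≥ a`,
`Σ_m q^{m(m+a)} [L-m-a; m] = Σ_j (-1)^j q^{j(5j+1+2a)/2} [L; ⌊(L-5j-a)/2⌋]`. -/
theorem finitized_rogers_ramanujan (a L : ℕ) (ha : a = 0 ∨ a = 1) (hL : a ≤ L) :
    ∑ᶠ m : ℕ, (RatFunc.X : RatFunc ℚ) ^ (m * (m + a))
        * gauss RatFunc.X ((L : ℤ) - m - a) (m : ℤ)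
      = ∑ᶠ j : ℤ, (-1 : RatFunc ℚ) ^ j
          * (RatFunc.X : RatFunc ℚ) ^ (Int.ediv (j * (5 * j + 1 + 2 * (a : ℤ))) 2)
          * gauss RatFunc.X (L : ℤ) (Int.ediv ((L : ℤ) - 5 * j - a) 2) := by
  have ha' : a ≤ 1 := by rcases ha with h | h <;> omega
  exact RR.main a ha' L hL
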